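/- Let F = {S_1, S_2, …, S_m} be a finite family of finite nonempty sets, let u be an element not contained in any S_i, let E_i = S_i ∪ {u} for each i, let E_0 = E_1 ∪ … ∪ E_m, and let H be the acyclic hypergraph with hyperedge family {E_0, E_1, …, E_m}. Then F contains two distinct sets S_i and S_j with S_i ⊆ S_j if and only if there exists a join tree for H that contains the edge E_iE_j between two of the hyperedges E_1, …, E_m. -/

import Mathlib

open SimpleGraph

/-- `T` is a join tree for the hypergraph whose hyperedge family is `E` (indexed by `ι`):
`T` is a tree on the hyperedges and, for every vertex `v`, the hyperedges containing `v`
induce a connected (nonempty sets being preconnected) subgraph of `T`. -/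
def IsJoinTree {V ι : Type*} (E : ι → Finset V) (T : SimpleGraph ι) : Prop :=
  T.IsTree ∧ ∀ v : V, (T.induce {i | v ∈ E i}).Preconnected

/-- A hypergraph is acyclic if it admits a join tree. -/
def IsAcyclicHG {V ι : Type*} (E : ι → Finset V) : Prop :=
  ∃ T : SimpleGraph ι, IsJoinTree E T
/-- The hyperedge family built from the family `S` and the new vertex `u`:
`E_i = S_i ∪ {u}` (indexed by `some i`) and `E_0 = E_1 ∪ ⋯ ∪ E_m` (indexed by `none`). -/
def FamE {α : Type*} [DecidableEq α] {m : ℕ} (S : Fin m → Finset α) (u : α) :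
    Option (Fin m) → Finset α
  | none => Finset.univ.biUnion fun i => insert u (S i)
  | some i => insert u (S i)

/-- no reachability when a set is closed under adjacency and separates. -/
lemma not_reachable_of_closed {V : Type*} {G : SimpleGraph V} {a b : V} (C : Set V)
    (hC : ∀ x y, G.Adj x y → x ∈ C → y ∈ C) (ha : a ∈ C) (hb : b ∉ C) :
    ¬ G.Reachable a b := by
  rintro ⟨w⟩
  induction w with
  | nil => exact hb ha
  | cons h p ih => exact ih (hC _ _ h ha) hb

/-- crossing lemma: if `a, c` lie in a "connected" set `A` but `a` cannot reach `c`
after deleting the edge `ab`, then `b ∈ A`. -/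
lemma mem_of_sep {ι : Type*} (T : SimpleGraph ι) (A : Set ι) (h : (T.induce A).Preconnected)
    {a c : ι} (ha : a ∈ A) (hc : c ∈ A) (b : ι)
    (hnr : ¬ (T \ fromEdgeSet {s(a,b)}).Reachable a c) : b ∈ A := by
  obtain ⟨w⟩ := h ⟨a, ha⟩ ⟨c, hc⟩
  set w' : T.Walk a c := w.map (SimpleGraph.Embedding.induce A).toHom with hw'
  by_cases he : s(a,b) ∈ w'.edges
  · have := w'.snd_mem_support_of_mem_edges he
    have this' : b ∈ (w.map (SimpleGraph.Embedding.induce A).toHom).support := this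
    rw [Walk.support_map, List.mem_map] at this'
    have this := this'
    obtain ⟨x, _, hx⟩ := this
    exact hx ▸ x.2
  · exact absurd ⟨w'.toDeleteEdges {s(a,b)} (fun e hew => by
      rintro rfl; exact he hew)⟩ hnr

/-- the star on `none` with the leaf `some i` re-attached to `some j`. -/
def starT {m : ℕ} (i j : Fin m) : SimpleGraph (Option (Fin m)) where
  Adj a b := a ≠ b ∧ ((a = none ∧ b ≠ some i) ∨ (b = none ∧ a ≠ some i) ∨
      (a = some i ∧ b = some j) ∨ (a = some j ∧ b = some i))
  symm := ⟨by
    rintro a b ⟨h1, h2⟩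
    exact ⟨h1.symm, by tauto⟩⟩
  loopless := ⟨by rintro a ⟨h1, _⟩; exact h1 rfl⟩

lemma starT_conn {m : ℕ} (i j : Fin m) (hij : i ≠ j) : (starT i j).Connected := by
  have key : ∀ a : Option (Fin m), (starT i j).Reachable a none := by
    intro a
    match a with
    | none => exact Reachable.refl _
    | some k =>
      by_cases hk : k = i
      · subst hk
        have h1 : (starT k j).Adj (some k) (some j) :=
          ⟨fun h => hij (Option.some.inj h), Or.inr (Or.inr (Or.inl ⟨rfl, rfl⟩))⟩
        have h2 : (starT k j).Adj (some j) none :=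
          ⟨Option.some_ne_none _, Or.inr (Or.inl ⟨rfl, fun h => hij (Option.some.inj h).symm⟩)⟩
        exact h1.reachable.trans h2.reachable
      · exact Adj.reachable
          ⟨Option.some_ne_none _, Or.inr (Or.inl ⟨rfl, fun h => hk (Option.some.inj h)⟩)⟩
  rw [connected_iff]
  exact ⟨fun a b => (key a).trans (key b).symm, ⟨none⟩⟩

lemma starT_isTree {m : ℕ} (i j : Fin m) (hij : i ≠ j) : (starT i j).IsTree := by
  refine ⟨starT_conn i j hij, ?_⟩
  rw [isAcyclic_iff_forall_adj_isBridge]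
  -- helper to build closed-set separations
  have closed : ∀ (a b : Option (Fin m)) (C : Set (Option (Fin m))), a ∈ C → b ∉ C →
      (∀ x y, (starT i j).Adj x y → ¬ (s(x,y) = s(a,b)) → x ∈ C → y ∈ C) →
      ¬ ((starT i j) \ fromEdgeSet {s(a, b)}).Reachable a b := by
    intro a b C haC hbC hcl
    refine not_reachable_of_closed C ?_ haC hbC
    rintro x y ⟨hxy, hnd⟩ hx
    rw [fromEdgeSet_adj, Set.mem_singleton_iff] at hnd
    exact hcl x y hxy (fun h => hnd ⟨h, hxy.ne⟩) hx
  have main : ∀ a b : Option (Fin m), (starT i j).Adj a b →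
      ((a = none ∧ b ≠ some i) ∨ (a = some i ∧ b = some j)) →
      ¬ ((starT i j) \ fromEdgeSet {s(a, b)}).Reachable a b := by
    intro a b hab hcase
    rcases hcase with ⟨rfl, hbi⟩ | ⟨rfl, rfl⟩
    · -- a = none, b = some k, k ≠ i
      obtain ⟨k, rfl⟩ := Option.ne_none_iff_exists'.mp (Ne.symm hab.1)
      by_cases hkj : k = j
      · subst hkj
        refine closed _ _ ({some i, some k} : Set _)ᶜ (by simp) (by simp) ?_
        intro x y hxy hns hx
        simp only [Set.mem_compl_iff, Set.mem_insert_iff, Set.mem_singleton_iff, not_or] at hx ⊢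
        rcases hxy.2 with ⟨rfl, hyi⟩ | ⟨rfl, hxi⟩ | ⟨rfl, rfl⟩ | ⟨rfl, rfl⟩
        · refine ⟨hyi, fun h => hns ?_⟩
          rw [h]
        · exact ⟨by simp, by simp⟩
        · exact absurd rfl hx.1
        · exact absurd rfl hx.2
      · refine closed _ _ ({some k} : Set _)ᶜ (by simp) (by simp) ?_
        intro x y hxy hns hx
        simp only [Set.mem_compl_iff, Set.mem_singleton_iff] at hx ⊢
        rintro rfl
        rcases hxy.2 with ⟨rfl, hyi⟩ | ⟨h, hxi⟩ | ⟨rfl, h⟩ | ⟨rfl, h⟩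
        · exact hns rfl
        · simp at h
        · exact hkj (Option.some.inj h)
        · exact hbi h
    · -- a = some i, b = some j
      refine closed _ _ ({some i} : Set _) rfl
        (fun h => hij (Option.some.inj h).symm) ?_
      intro x y hxy hns hx
      rw [Set.mem_singleton_iff] at hx; subst hx
      rcases hxy.2 with ⟨h, _⟩ | ⟨rfl, hxi⟩ | ⟨_, rfl⟩ | ⟨h, rfl⟩
      · simp at h
      · exact absurd rfl hxi
      · exact absurd rfl hns
      · rfl
  have symmred : ∀ a b : Option (Fin m),
      ¬ ((starT i j) \ fromEdgeSet {s(b, a)}).Reachable b a →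
      ¬ ((starT i j) \ fromEdgeSet {s(a, b)}).Reachable a b := by
    intro a b h hr
    rw [Sym2.eq_swap (a := a) (b := b)] at hr
    exact h hr.symm
  intro a b hab
  rw [isBridge_iff]
  rcases hab.2 with ⟨ha, hbi⟩ | ⟨hb, hai⟩ | ⟨ha, hb⟩ | ⟨ha, hb⟩
  · exact main _ _ hab (Or.inl ⟨ha, hbi⟩)
  · exact symmred _ _ (main _ _ hab.symm (Or.inl ⟨hb, hai⟩))
  · exact main _ _ hab (Or.inr ⟨ha, hb⟩)
  · exact symmred _ _ (main _ _ hab.symm (Or.inr ⟨hb, ha⟩))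

lemma starT_induce_preconn {m : ℕ} {i j : Fin m} (hij : i ≠ j) (A : Set (Option (Fin m)))
    (hA : A = ∅ ∨ (none ∈ A ∧ (some i ∈ A → some j ∈ A))) :
    ((starT i j).induce A).Preconnected := by
  rcases hA with rfl | ⟨h0, hija⟩
  · rintro ⟨x, hx⟩
    exact absurd hx (by simp)
  · have key : ∀ x : A, ((starT i j).induce A).Reachable x ⟨none, h0⟩ := by
      rintro ⟨x, hx⟩
      match x, hx with
      | none, hx => exact Reachable.refl _
      | some k, hx =>
        by_cases hk : k = i
        · subst hk
          have hj : some j ∈ A := hija hx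
          have e1 : ((starT k j).induce A).Adj ⟨some k, hx⟩ ⟨some j, hj⟩ :=
            ⟨by intro h; simp only [Function.Embedding.coe_subtype, Option.some.injEq] at h; exact hij h,
              Or.inr (Or.inr (Or.inl ⟨rfl, rfl⟩))⟩
          have e2 : ((starT k j).induce A).Adj ⟨some j, hj⟩ ⟨none, h0⟩ :=
            ⟨by simp, Or.inr (Or.inl ⟨rfl, fun h => hij (Option.some.inj h).symm⟩)⟩
          exact e1.reachable.trans e2.reachable
        · have e : ((starT i j).induce A).Adj ⟨some k, hx⟩ ⟨none, h0⟩ :=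
            ⟨by simp, Or.inr (Or.inl ⟨rfl, fun h => hk (Option.some.inj h)⟩)⟩
          exact e.reachable
    intro x y
    exact (key x).trans (key y).symm

/-- `F` contains two distinct sets `S_i ⊆ S_j` iff there is a join tree
for `H` containing an edge `E_iE_j` between two of the hyperedges `E_1, …, E_m`. -/
theorem stmt1 {α : Type*} [DecidableEq α] {m : ℕ} (hm : 0 < m)
    (S : Fin m → Finset α) (hS : ∀ i, (S i).Nonempty)
    (u : α) (hu : ∀ i, u ∉ S i) :
    (∃ i j : Fin m, i ≠ j ∧ S i ⊆ S j) ↔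
      ∃ (i j : Fin m), i ≠ j ∧
        ∃ T : SimpleGraph (Option (Fin m)), IsJoinTree (FamE S u) T ∧ T.Adj (some i) (some j) := by
  constructor
  · rintro ⟨i, j, hij, hsub⟩
    refine ⟨i, j, hij, starT i j, ⟨starT_isTree i j hij, ?_⟩,
      fun h => hij (Option.some.inj h), Or.inr (Or.inr (Or.inl ⟨rfl, rfl⟩))⟩
    intro v
    apply starT_induce_preconn hij
    by_cases hv : ∃ k, v ∈ insert u (S k)
    · obtain ⟨k, hk⟩ := hv
      refine Or.inr ⟨?_, ?_⟩
      · show v ∈ Finset.univ.biUnion fun i => insert u (S i)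
        exact Finset.mem_biUnion.mpr ⟨k, Finset.mem_univ _, hk⟩
      · intro hvi
        show v ∈ insert u (S j)
        have hvi' : v ∈ insert u (S i) := hvi
        rcases Finset.mem_insert.mp hvi' with rfl | hvS
        · exact Finset.mem_insert_self _ _
        · exact Finset.mem_insert_of_mem (hsub hvS)
    · left
      ext o
      simp only [Set.mem_setOf_eq, Set.mem_empty_iff_false, iff_false]
      match o with
      | none =>
        intro hvo
        have : v ∈ Finset.univ.biUnion fun i => insert u (S i) := hvo
        obtain ⟨k, _, hk⟩ := Finset.mem_biUnion.mp this
        exact hv ⟨k, hk⟩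
      | some k => exact fun hvo => hv ⟨k, hvo⟩
  · rintro ⟨i, j, hij, T, ⟨hTtree, hTjoin⟩, hTadj⟩
    have hbr : T.IsBridge s(some i, some j) :=
      (isAcyclic_iff_forall_adj_isBridge.mp hTtree.2) hTadj
    rw [isBridge_iff] at hbr
    have hnr := hbr
    have hnone : ∀ k : Fin m, ∀ v ∈ S k, v ∈ FamE S u none := by
      intro k v hv
      show v ∈ Finset.univ.biUnion fun i => insert u (S i)
      exact Finset.mem_biUnion.mpr ⟨k, Finset.mem_univ _, Finset.mem_insert_of_mem hv⟩
    by_cases hr : (T \ fromEdgeSet {s(some i, some j)}).Reachable (some i) none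
    · -- then `some j` cannot reach `none` after deleting the edge; `S j ⊆ S i`
      have hnr' : ¬ (T \ fromEdgeSet {s(some j, some i)}).Reachable (some j) none := by
        rw [Sym2.eq_swap (a := (some j : Option (Fin m))) (b := some i)]
        intro h
        exact hnr (hr.trans h.symm)
      refine ⟨j, i, hij.symm, fun v hv => ?_⟩
      have hmem : some i ∈ {o | v ∈ FamE S u o} :=
        mem_of_sep T _ (hTjoin v) (Finset.mem_insert_of_mem hv) (hnone j v hv) _ hnr'
      have : v ∈ insert u (S i) := hmem
      rcases Finset.mem_insert.mp this with rfl | h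
      · exact absurd hv (hu j)
      · exact h
    · -- `some i` cannot reach `none`; `S i ⊆ S j`
      refine ⟨i, j, hij, fun v hv => ?_⟩
      have hmem : some j ∈ {o | v ∈ FamE S u o} :=
        mem_of_sep T _ (hTjoin v) (Finset.mem_insert_of_mem hv) (hnone i v hv) _ hr
      have : v ∈ insert u (S j) := hmem
      rcases Finset.mem_insert.mp this with rfl | h
      · exact absurd hv (hu i)
      · exact h
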